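/- In the graded region of the eXp mesh the nodes are strictly increasing, 0 = x₀ < x₁ < ⋯ < x_{N/4−1}, and for every 1 ≤ j ≤ N/4−1 the mesh width h_j = x_j − x_{j−1} satisfies h_j ≤ (ε/β)(p+1) N^{−1} max_{t ∈ [(j−1)/N, j/N]} φ′(t) ≤ (ε/β)(p+1) e^{βx_j/((p+1)ε)}. -/

import Mathlib

/-- The constant `C_{p,ε} = 1 − exp(−β/((p+1)ε))`. -/
noncomputable def Cpe (p : ℕ) (β ε : ℝ) : ℝ :=
  1 - Real.exp (-(β / (((p:ℝ) + 1) * ε)))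

/-- The mesh generating function `φ(t) = −ln(1 − 4 C_{p,ε} t)`. -/
noncomputable def phiFun (c : ℝ) : ℝ → ℝ := fun t => -Real.log (1 - 4 * c * t)

/-- The graded nodes `x_j = (ε/β)(p+1)φ(j/N)` of the eXp mesh. -/
noncomputable def gradedNode (p N : ℕ) (β ε : ℝ) (j : ℕ) : ℝ :=
  (ε / β) * ((p:ℝ) + 1) * phiFun (Cpe p β ε) ((j:ℝ) / (N:ℝ))

/-- in the graded region of the eXp mesh the nodes are strictly
increasing, `0 = x₀ < x₁ < ⋯ < x_{N/4−1}`, and each mesh width satisfies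
`h_j ≤ (ε/β)(p+1)N⁻¹ max_{[(j−1)/N, j/N]} φ′ ≤ (ε/β)(p+1) e^{βx_j/((p+1)ε)}`. -/
theorem stmt_2 (p N : ℕ) (hp : 3 ≤ p) (hN : 8 ≤ N) (hdvd : 4 ∣ N)
    (β ε : ℝ) (hβ : 0 < β) (hε : ε ∈ Set.Ioc (0:ℝ) 1) :
    gradedNode p N β ε 0 = 0 ∧
    (∀ i j : ℕ, i < j → j ≤ N / 4 - 1 →
      gradedNode p N β ε i < gradedNode p N β ε j) ∧
    ∀ j : ℕ, 1 ≤ j → j ≤ N / 4 - 1 →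
      gradedNode p N β ε j - gradedNode p N β ε (j - 1)
          ≤ (ε / β) * ((p:ℝ) + 1) * (N:ℝ)⁻¹ *
              sSup (deriv (phiFun (Cpe p β ε)) ''
                Set.Icc (((j:ℝ) - 1) / (N:ℝ)) ((j:ℝ) / (N:ℝ))) ∧
      (ε / β) * ((p:ℝ) + 1) * (N:ℝ)⁻¹ *
              sSup (deriv (phiFun (Cpe p β ε)) ''
                Set.Icc (((j:ℝ) - 1) / (N:ℝ)) ((j:ℝ) / (N:ℝ)))
          ≤ (ε / β) * ((p:ℝ) + 1) *
              Real.exp (β * gradedNode p N β ε j / (((p:ℝ) + 1) * ε)) := by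
  obtain ⟨hε0, hε1⟩ := hε
  set c := Cpe p β ε with hc
  have hP : (0:ℝ) < (p:ℝ) + 1 := by positivity
  have hxpos : 0 < β / (((p:ℝ)+1) * ε) := by positivity
  have hc0 : 0 < c := by
    have h1 : Real.exp (-(β / (((p:ℝ)+1)*ε))) < 1 := by
      rw [Real.exp_lt_one_iff]; linarith
    simp only [hc, Cpe]; linarith
  have hc1 : c < 1 := by
    have := Real.exp_pos (-(β / (((p:ℝ)+1)*ε)))
    simp only [hc, Cpe]; linarith
  have hN0 : (0:ℝ) < (N:ℝ) := by
    have : (8:ℝ) ≤ (N:ℝ) := by exact_mod_cast hN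
    linarith
  have hN8 : (8:ℝ) ≤ (N:ℝ) := by exact_mod_cast hN
  have hK : 0 < (ε / β) * ((p:ℝ) + 1) := by positivity
  have hden : ∀ s : ℝ, 0 ≤ s → 4*s ≤ 1 → 0 < 1 - 4*c*s := by
    intro s h0 h1; nlinarith
  have hbound : ∀ j : ℕ, j ≤ N / 4 - 1 → 4*(j:ℝ) ≤ (N:ℝ) - 4 := by
    intro j hj
    have h : 4*j + 4 ≤ N := by omega
    have : (4*j + 4 : ℝ) ≤ (N:ℝ) := by exact_mod_cast h
    linarith
  have hfrac : ∀ s : ℝ, 0 ≤ s → 4*s ≤ (N:ℝ) - 4 → 0 < 1 - 4*c*(s/(N:ℝ)) := by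
    intro s h0 h1
    apply hden _ (by positivity)
    rw [mul_div_assoc', div_le_one hN0]
    linarith
  have hderiv : ∀ s : ℝ, 1 - 4*c*s ≠ 0 → deriv (phiFun c) s = 4*c/(1-4*c*s) := by
    intro s hs
    have h1 : HasDerivAt (fun t:ℝ => 1 - 4*c*t) (-(4*c)) s := by
      simpa using ((hasDerivAt_id s).const_mul (4*c)).const_sub 1
    have h2 : HasDerivAt (fun t => Real.log (1-4*c*t)) ((1-4*c*s)⁻¹ * (-(4*c))) s :=
      by have := (Real.hasDerivAt_log hs).comp s h1; exact this
    have h3 : HasDerivAt (phiFun c) (4*c/(1-4*c*s)) s := by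
      have := h2.neg
      rw [show 4*c/(1-4*c*s) = -((1-4*c*s)⁻¹ * -(4*c)) by ring]
      exact this
    exact h3.deriv
  refine ⟨by simp [gradedNode, phiFun], ?_, ?_⟩
  · -- strict monotonicity
    intro i j hij hj
    have hi : i ≤ N / 4 - 1 := le_trans (Nat.le_of_lt hij) hj
    have hij' : (i:ℝ) < (j:ℝ) := by exact_mod_cast hij
    have hpi : 0 < 1 - 4*c*((i:ℝ)/N) := hfrac _ (by positivity) (hbound i hi)
    have hpj : 0 < 1 - 4*c*((j:ℝ)/N) := hfrac _ (by positivity) (hbound j hj)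
    have hlt : 1 - 4*c*((j:ℝ)/N) < 1 - 4*c*((i:ℝ)/N) := by
      have : (i:ℝ)/N < (j:ℝ)/N := by gcongr
      nlinarith
    have hlog := Real.log_lt_log hpj hlt
    unfold gradedNode phiFun
    rw [← hc]
    have : -Real.log (1 - 4*c*((i:ℝ)/N)) < -Real.log (1 - 4*c*((j:ℝ)/N)) := by linarith
    exact mul_lt_mul_of_pos_left this hK
  · -- mesh width bounds
    intro j hj1 hj
    set a : ℝ := ((j:ℝ) - 1) / N with ha
    set b : ℝ := (j:ℝ) / N with hb
    have hj1' : (1:ℝ) ≤ (j:ℝ) := by exact_mod_cast hj1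
    have hA : 0 < 1 - 4*c*a := hfrac _ (by linarith) (by
      have := hbound j hj; linarith)
    have hB : 0 < 1 - 4*c*b := hfrac _ (by positivity) (hbound j hj)
    have hab : a ≤ b := (div_le_div_iff_of_pos_right hN0).mpr (by linarith)
    -- the supremum of the derivative on [a,b]
    have hmem : ∀ s ∈ Set.Icc a b, 0 < 1 - 4*c*s := by
      intro s hs
      have h0 : 0 ≤ s := le_trans (div_nonneg (by linarith) hN0.le) hs.1
      have h1 : 4*s ≤ 1 := by
        have hsb : s ≤ b := hs.2
        have h4b : 4*b ≤ 1 := by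
          rw [hb, mul_div_assoc', div_le_one hN0]
          have := hbound j hj; linarith
        linarith
      exact hden s h0 h1
    have hG : IsGreatest (deriv (phiFun c) '' Set.Icc a b) (4*c/(1-4*c*b)) := by
      constructor
      · exact ⟨b, Set.right_mem_Icc.mpr hab, hderiv b hB.ne'⟩
      · rintro x ⟨s, hs, rfl⟩
        have hS := hmem s hs
        rw [hderiv s hS.ne']
        have hle : 1 - 4*c*b ≤ 1 - 4*c*s := by nlinarith [hs.2]
        exact div_le_div_of_nonneg_left (by positivity) hB hle
    have hsup : sSup (deriv (phiFun c) '' Set.Icc a b) = 4*c/(1-4*c*b) := hG.csSup_eq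
    rw [hsup]
    -- cast of j - 1
    have hcast : ((j - 1 : ℕ) : ℝ) = (j:ℝ) - 1 := by
      have := Nat.cast_sub hj1 (R := ℝ); simpa using this
    have hdelta : gradedNode p N β ε j - gradedNode p N β ε (j - 1)
        = (ε / β) * ((p:ℝ) + 1) * (Real.log (1 - 4*c*a) - Real.log (1 - 4*c*b)) := by
      unfold gradedNode phiFun
      rw [← hc, hcast, ← ha, ← hb]
      ring
    have hlog : Real.log (1 - 4*c*a) - Real.log (1 - 4*c*b)
        ≤ (1 - 4*c*a)/(1 - 4*c*b) - 1 := by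
      rw [← Real.log_div hA.ne' hB.ne']
      exact Real.log_le_sub_one_of_pos (div_pos hA hB)
    have hba : b - a = 1 / N := by rw [ha, hb]; field_simp; ring
    have hquot : (1 - 4*c*a)/(1 - 4*c*b) - 1 = (N:ℝ)⁻¹ * (4*c/(1-4*c*b)) := by
      have h1 : (1 - 4*c*a) - (1 - 4*c*b) = 4*c/N := by
        linear_combination 4*c*hba
      rw [div_sub_one hB.ne', h1]
      field_simp
    constructor
    · calc gradedNode p N β ε j - gradedNode p N β ε (j - 1)
          = (ε / β) * ((p:ℝ) + 1) * (Real.log (1 - 4*c*a) - Real.log (1 - 4*c*b)) := hdelta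
        _ ≤ (ε / β) * ((p:ℝ) + 1) * ((1 - 4*c*a)/(1 - 4*c*b) - 1) :=
            mul_le_mul_of_nonneg_left hlog hK.le
        _ = (ε / β) * ((p:ℝ) + 1) * (N:ℝ)⁻¹ * (4*c/(1-4*c*b)) := by rw [hquot]; ring
    · have harg : β * gradedNode p N β ε j / (((p:ℝ)+1)*ε) = -Real.log (1 - 4*c*b) := by
        unfold gradedNode phiFun
        rw [← hc, ← hb]
        field_simp
      rw [harg, Real.exp_neg, Real.exp_log hB]
      have hBi : 0 < (1 - 4*c*b)⁻¹ := by positivity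
      have h4cN : (N:ℝ)⁻¹ * (4*c) ≤ 1 := by
        rw [inv_mul_le_iff₀ hN0]
        nlinarith
      calc (ε / β) * ((p:ℝ) + 1) * (N:ℝ)⁻¹ * (4*c/(1-4*c*b))
          = (ε / β) * ((p:ℝ) + 1) * (((N:ℝ)⁻¹ * (4*c)) * (1-4*c*b)⁻¹) := by
            rw [div_eq_mul_inv]; ring
        _ ≤ (ε / β) * ((p:ℝ) + 1) * (1 * (1-4*c*b)⁻¹) := by
            apply mul_le_mul_of_nonneg_left _ hK.le
            exact mul_le_mul_of_nonneg_right h4cN hBi.le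
        _ = (ε / β) * ((p:ℝ) + 1) * (1-4*c*b)⁻¹ := by ring
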